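/- Let R be an integral domain. Then there exists an epimorphism h : I → J of R-modules with I injective such that an R-module M is torsion-free if and only if every homomorphism M → J factors through h. -/

import Mathlib

universe u

open CategoryTheory TensorProduct Pointwise

namespace TFC

variable (R : Type u) [CommRing R] [IsDomain R]
variable {M F : Type u} [AddCommGroup M] [Module R M] [AddCommGroup F] [Module R F]

section qmap

variable (π : F →ₗ[R] M)

lemma comap_le (r : R) :
    Ideal.span {r} • (⊤ : Submodule R (LinearMap.ker π)) ≤
      (Ideal.span {r} • (⊤ : Submodule R F)).comap (LinearMap.ker π).subtype := by
  rw [← Submodule.map_le_iff_le_comap, Submodule.map_smul'']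
  exact Submodule.smul_mono le_rfl le_top

/-- The induced map `K/rK → F/rF` for `K` the kernel of `π`. -/
noncomputable def qmap (r : R) :
    (↥(LinearMap.ker π) ⧸ (Ideal.span {r} • (⊤ : Submodule R (LinearMap.ker π)))) →ₗ[R]
      (F ⧸ (Ideal.span {r} • (⊤ : Submodule R F))) :=
  Submodule.mapQ _ _ (LinearMap.ker π).subtype (comap_le R π r)

lemma square (r : R) :
    (TensorProduct.tensorQuotEquivQuotSMul F (Ideal.span {r})).toLinearMap ∘ₗ
      (LinearMap.ker π).subtype.rTensor (R ⧸ Ideal.span {r}) =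
    qmap R π r ∘ₗ
      (TensorProduct.tensorQuotEquivQuotSMul (↥(LinearMap.ker π))
        (Ideal.span {r})).toLinearMap := by
  apply TensorProduct.ext'
  intro x y
  obtain ⟨s, rfl⟩ := Ideal.Quotient.mk_surjective y
  simp [qmap, Submodule.mapQ_apply]

lemma rTensor_inj_iff (r : R) :
    Function.Injective ((LinearMap.ker π).subtype.rTensor (R ⧸ Ideal.span {r})) ↔
      Function.Injective (qmap R π r) := by
  have h := square R π r
  have key : ∀ z,
      (tensorQuotEquivQuotSMul F (Ideal.span {r}))
        ((LinearMap.ker π).subtype.rTensor (R ⧸ Ideal.span {r})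
          ((tensorQuotEquivQuotSMul (↥(LinearMap.ker π)) (Ideal.span {r})).symm z)) =
        qmap R π r z := by
    intro z
    have := DFunLike.congr_fun h
      ((tensorQuotEquivQuotSMul (↥(LinearMap.ker π)) (Ideal.span {r})).symm z)
    simpa using this
  constructor
  · intro hi z₁ z₂ hz
    have e1 := key z₁
    have e2 := key z₂
    rw [hz] at e1
    exact (tensorQuotEquivQuotSMul (↥(LinearMap.ker π)) (Ideal.span {r})).symm.injective
      (hi ((tensorQuotEquivQuotSMul F (Ideal.span {r})).injective (e1.trans e2.symm)))
  · intro hq a b hab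
    have e1 := key ((tensorQuotEquivQuotSMul (↥(LinearMap.ker π)) (Ideal.span {r})) a)
    have e2 := key ((tensorQuotEquivQuotSMul (↥(LinearMap.ker π)) (Ideal.span {r})) b)
    rw [LinearEquiv.symm_apply_apply] at e1 e2
    rw [hab] at e1
    exact (tensorQuotEquivQuotSMul (↥(LinearMap.ker π)) (Ideal.span {r})).injective
      (hq (e1.symm.trans e2))

lemma mem_pointwise_smul {A : Type u} [AddCommGroup A] [Module R A]
    {x : A} {r : R} {S : Submodule R A} (hx : x ∈ r • S) : ∃ y ∈ S, r • y = x := by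
  rw [← Submodule.mem_toAddSubgroup, Submodule.pointwise_smul_toAddSubgroup] at hx
  obtain ⟨y, hy, hyx⟩ := (AddSubgroup.mem_smul_pointwise_iff_exists _ _ _).mp hx
  exact ⟨y, hy, hyx⟩

lemma tf_iff [NoZeroSMulDivisors R F] (hπ : Function.Surjective π) :
    NoZeroSMulDivisors R M ↔
    ∀ r : R, Function.Injective ((LinearMap.ker π).subtype.rTensor (R ⧸ Ideal.span {r})) := by
  constructor
  · intro inst r
    rw [rTensor_inj_iff]
    rw [injective_iff_map_eq_zero]
    intro z hz
    obtain ⟨x, rfl⟩ := Submodule.Quotient.mk_surjective _ z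
    rw [qmap, Submodule.mapQ_apply, Submodule.Quotient.mk_eq_zero,
      Submodule.ideal_span_singleton_smul] at hz
    obtain ⟨y, -, hy⟩ := mem_pointwise_smul R hz
    have hpres : π (x : F) = 0 := x.2
    have : r • π y = 0 := by
      rw [← map_smul, hy]; exact hpres
    rcases smul_eq_zero.mp this with hr | hker
    · subst hr
      have hx0 : (x : F) = 0 := by simpa using hy.symm
      have : x = 0 := Subtype.ext hx0
      rw [this, Submodule.Quotient.mk_eq_zero]
      exact Submodule.zero_mem _
    · rw [Submodule.Quotient.mk_eq_zero, Submodule.ideal_span_singleton_smul]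
      have hyK : y ∈ LinearMap.ker π := hker
      have : r • (⟨y, hyK⟩ : LinearMap.ker π) ∈ r • (⊤ : Submodule R (LinearMap.ker π)) :=
        Submodule.smul_mem_pointwise_smul _ _ _ trivial
      convert this
      exact Subtype.ext hy.symm
  · intro h
    refine ⟨fun {r m} hrm => ?_⟩
    by_cases hr : r = 0
    · exact Or.inl hr
    refine Or.inr ?_
    by_contra hm
    obtain ⟨x, hpx⟩ := hπ m
    have hxK : π (r • x) = 0 := by rw [map_smul, hpx, hrm]
    set xk : LinearMap.ker π := ⟨r • x, hxK⟩ with hxkdef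
    have h1 : qmap R π r (Submodule.Quotient.mk xk) = 0 := by
      rw [qmap, Submodule.mapQ_apply, Submodule.Quotient.mk_eq_zero,
        Submodule.ideal_span_singleton_smul]
      exact Submodule.smul_mem_pointwise_smul _ _ _ trivial
    have hq := (rTensor_inj_iff R π r).mp (h r)
    have h2 : Submodule.Quotient.mk xk =
        (0 : ↥(LinearMap.ker π) ⧸
          (Ideal.span {r} • (⊤ : Submodule R (LinearMap.ker π)))) := by
      apply hq
      rw [h1, map_zero]
    rw [Submodule.Quotient.mk_eq_zero, Submodule.ideal_span_singleton_smul] at h2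
    obtain ⟨y, -, hy⟩ := mem_pointwise_smul R h2
    have hy' : r • (y : F) = r • x := congrArg Subtype.val hy
    have hyx : (y : F) = x := by
      have h3 := sub_eq_zero.mpr hy'
      rw [← smul_sub] at h3
      rcases smul_eq_zero.mp h3 with h' | h'
      · exact absurd h' hr
      · exact sub_eq_zero.mp h'
    have : x ∈ LinearMap.ker π := hyx ▸ y.2
    have : π x = 0 := this
    rw [hpx] at this
    exact hm this

lemma factor_through (hπ : Function.Surjective π) {T : Type u} [AddCommGroup T] [Module R T]
    (g : F →ₗ[R] T) (hg : LinearMap.ker π ≤ LinearMap.ker g) :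
    ∃ f : M →ₗ[R] T, f ∘ₗ π = g := by
  let pbar := (LinearMap.ker π).liftQ π le_rfl
  have hinj : Function.Injective pbar := by
    rw [← LinearMap.ker_eq_bot]
    exact Submodule.ker_liftQ_eq_bot _ _ _ le_rfl
  have hsurj : Function.Surjective pbar := by
    intro m
    obtain ⟨x, hx⟩ := hπ m
    exact ⟨Submodule.Quotient.mk x, by simpa [pbar] using hx⟩
  let eq := LinearEquiv.ofBijective pbar ⟨hinj, hsurj⟩
  refine ⟨(LinearMap.ker π).liftQ g hg ∘ₗ eq.symm.toLinearMap, LinearMap.ext fun x => ?_⟩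
  have hmk : eq.symm (π x) = Submodule.Quotient.mk x := by
    apply eq.injective
    rw [LinearEquiv.apply_symm_apply]
    show π x = pbar (Submodule.Quotient.mk x)
    simp [pbar]
  simp [hmk]

lemma shift [Module.Projective R F] (hπ : Function.Surjective π)
    {N I : Type u} [AddCommGroup N] [Module R N] [AddCommGroup I] [Module R I]
    [Module.Injective R I] (e : N →ₗ[R] I) (he : Function.Injective e) :
    (∀ f : M →ₗ[R] (I ⧸ LinearMap.range e), ∃ k : M →ₗ[R] I,
        (LinearMap.range e).mkQ ∘ₗ k = f) ↔
    (∀ φ : ↥(LinearMap.ker π) →ₗ[R] N, ∃ ψ : F →ₗ[R] N,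
        ψ ∘ₗ (LinearMap.ker π).subtype = φ) := by
  have he' : ∀ z : LinearMap.range e, e ((LinearEquiv.ofInjective e he).symm z) = z := by
    intro z
    conv_rhs => rw [← (LinearEquiv.ofInjective e he).apply_symm_apply z]
    rfl
  constructor
  · intro hlift φ
    obtain ⟨ψ', hψ'⟩ := Module.Injective.out (LinearMap.ker π).subtype
      (Submodule.injective_subtype _) (e ∘ₗ φ)
    have hker : LinearMap.ker π ≤ LinearMap.ker ((LinearMap.range e).mkQ ∘ₗ ψ') := by
      intro y hy
      have h1 : ψ' y = e (φ ⟨y, hy⟩) := hψ' ⟨y, hy⟩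
      simp only [LinearMap.mem_ker, LinearMap.comp_apply, h1]
      rw [← LinearMap.mem_ker, Submodule.ker_mkQ]
      exact ⟨φ ⟨y, hy⟩, rfl⟩
    obtain ⟨f, hf⟩ := factor_through R π hπ ((LinearMap.range e).mkQ ∘ₗ ψ') hker
    obtain ⟨k, hk⟩ := hlift f
    have hθ : ∀ x, (ψ' - k ∘ₗ π) x ∈ LinearMap.range e := by
      intro x
      rw [← Submodule.ker_mkQ (LinearMap.range e), LinearMap.mem_ker, LinearMap.sub_apply,
        map_sub]
      have h1 : (LinearMap.range e).mkQ (ψ' x) = f (π x) := (DFunLike.congr_fun hf x).symm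
      have h2 : (LinearMap.range e).mkQ (k (π x)) = f (π x) := DFunLike.congr_fun hk (π x)
      rw [h1, LinearMap.comp_apply, h2, sub_self]
    refine ⟨(LinearEquiv.ofInjective e he).symm.toLinearMap ∘ₗ
      LinearMap.codRestrict _ (ψ' - k ∘ₗ π) hθ, ?_⟩
    apply LinearMap.ext
    intro y
    apply he
    simp only [LinearMap.comp_apply, LinearEquiv.coe_coe, Submodule.coe_subtype]
    rw [he']
    have hy0 : π (y : F) = 0 := y.2
    simp only [LinearMap.codRestrict_apply, LinearMap.sub_apply, LinearMap.comp_apply, hy0,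
      map_zero, sub_zero]
    exact hψ' y
  · intro hext f
    obtain ⟨g, hg⟩ := Module.projective_lifting_property (LinearMap.range e).mkQ
      (f ∘ₗ π) (Submodule.mkQ_surjective _)
    have hgK : ∀ y : LinearMap.ker π, g (y : F) ∈ LinearMap.range e := by
      intro y
      rw [← Submodule.ker_mkQ (LinearMap.range e), LinearMap.mem_ker]
      have h1 : (LinearMap.range e).mkQ (g (y : F)) = f (π (y : F)) :=
        DFunLike.congr_fun hg (y : F)
      rw [h1, show π (y : F) = 0 from y.2, map_zero]
    obtain ⟨ψ, hψ⟩ := hext ((LinearEquiv.ofInjective e he).symm.toLinearMap ∘ₗ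
      LinearMap.codRestrict _ (g ∘ₗ (LinearMap.ker π).subtype) (fun y => hgK y))
    have hker : LinearMap.ker π ≤ LinearMap.ker (g - e ∘ₗ ψ) := by
      intro y hy
      have h1 : ψ y = (LinearEquiv.ofInjective e he).symm ⟨g y, hgK ⟨y, hy⟩⟩ :=
        DFunLike.congr_fun hψ ⟨y, hy⟩
      rw [LinearMap.mem_ker, LinearMap.sub_apply, LinearMap.comp_apply, h1, he', sub_self]
    obtain ⟨k, hk⟩ := factor_through R π hπ (g - e ∘ₗ ψ) hker
    refine ⟨k, ?_⟩
    apply LinearMap.ext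
    intro m
    obtain ⟨x, rfl⟩ := hπ m
    have hkx : k (π x) = g x - e (ψ x) := DFunLike.congr_fun hk x
    have hgx : (LinearMap.range e).mkQ (g x) = f (π x) := DFunLike.congr_fun hg x
    have heψ : (LinearMap.range e).mkQ (e (ψ x)) = 0 := by
      rw [← LinearMap.mem_ker, Submodule.ker_mkQ]
      exact ⟨ψ x, rfl⟩
    simp only [LinearMap.comp_apply, hkx, map_sub, hgx, heψ, sub_zero]

lemma pi_ext_iff :
    (∀ r : R, Function.Injective ((LinearMap.ker π).subtype.rTensor (R ⧸ Ideal.span {r}))) ↔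
    (∀ φ : ↥(LinearMap.ker π) →ₗ[R] (∀ r : R, CharacterModule (R ⧸ Ideal.span {r})),
      ∃ ψ : F →ₗ[R] (∀ r : R, CharacterModule (R ⧸ Ideal.span {r})),
        ψ ∘ₗ (LinearMap.ker π).subtype = φ) := by
  classical
  constructor
  · intro h φ
    have hr : ∀ r : R, ∃ ψr : F →ₗ[R] CharacterModule (R ⧸ Ideal.span {r}),
        ψr ∘ₗ (LinearMap.ker π).subtype = LinearMap.proj r ∘ₗ φ := by
      intro r
      have hs := rTensor_injective_iff_lcomp_surjective.mp (h r)
      obtain ⟨ψr, hψr⟩ := hs (LinearMap.proj r ∘ₗ φ)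
      exact ⟨ψr, hψr⟩
    choose ψ hψ using hr
    refine ⟨LinearMap.pi ψ, ?_⟩
    apply LinearMap.ext
    intro y
    funext r
    exact DFunLike.congr_fun (hψ r) y
  · intro h r
    rw [rTensor_injective_iff_lcomp_surjective]
    intro g
    obtain ⟨ψ, hψ⟩ := h (LinearMap.single R (fun s : R => CharacterModule (R ⧸ Ideal.span {s})) r
      ∘ₗ g)
    refine ⟨LinearMap.proj r ∘ₗ ψ, ?_⟩
    apply LinearMap.ext
    intro y
    have h1 := DFunLike.congr_fun hψ y
    have h2 : ψ ((LinearMap.ker π).subtype y) r =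
        (LinearMap.single R (fun s : R => CharacterModule (R ⧸ Ideal.span {s})) r) (g y) r :=
      congrFun h1 r
    simpa [Pi.single_eq_same] using h2

end qmap

instance : NoZeroSMulDivisors R (M →₀ R) := by
  constructor
  intro r v h
  by_cases hr : r = 0
  · exact Or.inl hr
  · refine Or.inr ?_
    ext a
    have h1 := DFunLike.congr_fun h a
    rw [Finsupp.smul_apply] at h1
    simpa [hr] using (mul_eq_zero.mp (by simpa [smul_eq_mul] using h1)).resolve_left hr

end TFC

/-- Over an integral domain `R`, there is an epimorphism `h : I → J` with `I`
injective such that a module `M` is torsion-free iff every homomorphism `M → J`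
factors through `h`. -/
theorem torsionFree_cofactorization (R : Type u) [CommRing R] [IsDomain R] :
    ∃ (I J : ModuleCat.{u} R) (h : ↥I →ₗ[R] ↥J),
      Function.Surjective h ∧ Module.Injective R ↥I ∧
        ∀ M : ModuleCat.{u} R,
          NoZeroSMulDivisors R ↥M ↔
            ∀ f : ↥M →ₗ[R] ↥J, ∃ k : ↥M →ₗ[R] ↥I, h ∘ₗ k = f := by
  classical
  let Nc : ModuleCat.{u} R := ModuleCat.of R (∀ r : R, CharacterModule (R ⧸ Ideal.span {r}))
  let Ic : ModuleCat.{u} R := Injective.under Nc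
  let e : ↥Nc →ₗ[R] ↥Ic := (Injective.ι Nc).hom
  have he : Function.Injective e :=
    (ModuleCat.mono_iff_injective (Injective.ι Nc)).mp inferInstance
  have hcat : CategoryTheory.Injective (ModuleCat.of R ↥Ic) := Injective.injective_under Nc
  have hinj : Module.Injective R ↥Ic := Module.injective_module_of_injective_object R ↥Ic
  refine ⟨Ic, ModuleCat.of R (↥Ic ⧸ LinearMap.range e), (LinearMap.range e).mkQ,
    Submodule.mkQ_surjective _, hinj, ?_⟩
  intro M
  have hπ : Function.Surjective (Finsupp.linearCombination R (_root_.id : ↥M → ↥M)) :=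
    fun m => ⟨Finsupp.single m 1, by simp⟩
  exact (TFC.tf_iff R (Finsupp.linearCombination R _root_.id) hπ).trans
    ((TFC.pi_ext_iff R (Finsupp.linearCombination R _root_.id)).trans
      (TFC.shift R (Finsupp.linearCombination R _root_.id) hπ e he).symm)
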